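/- Let D be a division ring and F a subfield of D contained in the center of D. Let x ∈ D with x ∉ F·1 and x² ∈ F·1 + F·x (so that E := F·1 + F·x is a two-dimensional commutative division subring of D), and let y ∈ D with y ∉ E. Then the four elements 1, x, y, x*y are linearly independent over F. -/

import Mathlib

/-- Let `D` be a division ring which is an algebra over a field `F` (i.e. `F` is a
central subfield of `D`). If `x ∉ F·1` satisfies `x² ∈ F·1 + F·x` and `y ∉ F·1 + F·x`,
then `1, x, y, x*y` are linearly independent over `F`. -/
theorem linearIndependent_one_x_y_xy {F D : Type*} [Field F] [DivisionRing D]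
    [Algebra F D] (x : D)
    (hx : x ∉ Submodule.span F ({1} : Set D))
    (hx2 : x ^ 2 ∈ Submodule.span F ({1, x} : Set D))
    (y : D) (hy : y ∉ Submodule.span F ({1, x} : Set D)) :
    LinearIndependent F ![(1 : D), x, y, x * y] := by
  -- extract x^2 = p•1 + q•x
  obtain ⟨p, q, hpq⟩ := Submodule.mem_span_pair.mp hx2
  have hone : (1 : D) ∈ Submodule.span F ({1, x} : Set D) :=
    Submodule.subset_span (by simp)
  have hxmem : x ∈ Submodule.span F ({1, x} : Set D) :=
    Submodule.subset_span (by simp)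
  -- x is not a scalar multiple of 1
  have hns : ∀ t : F, x ≠ t • (1 : D) := by
    intro t h
    exact hx (h ▸ Submodule.smul_mem _ t (Submodule.mem_span_singleton_self _))
  -- 1, x linearly independent
  have hli : ∀ u v : F, u • (1 : D) + v • x = 0 → u = 0 ∧ v = 0 := by
    intro u v h
    have hv : v = 0 := by
      by_contra hv
      have hx' : v • x = (-u) • (1 : D) := by linear_combination (norm := module) h
      exact hns (v⁻¹ * -u)
        (by rw [← smul_smul, ← hx', smul_smul, inv_mul_cancel₀ hv, one_smul])
    subst hv
    simp only [zero_smul, add_zero] at h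
    rw [Algebra.smul_def, mul_one] at h
    exact ⟨(map_eq_zero_iff _ (algebraMap F D).injective).mp h, rfl⟩
  -- product of two elements of span {1,x} is in the span
  have hmul : ∀ u v u' v' : F,
      (u • (1 : D) + v • x) * (u' • (1 : D) + v' • x) ∈
        Submodule.span F ({1, x} : Set D) := by
    intro u v u' v'
    have expand : (u • (1 : D) + v • x) * (u' • (1 : D) + v' • x)
        = (u * u') • (1 : D) + (u * v' + v * u') • x + (v * v') • (x ^ 2) := by
      simp only [mul_add, add_mul, smul_mul_assoc, mul_smul_comm, smul_smul,
        one_mul, mul_one, sq]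
      module
    rw [expand]
    exact Submodule.add_mem _
      (Submodule.add_mem _ (Submodule.smul_mem _ _ hone) (Submodule.smul_mem _ _ hxmem))
      (Submodule.smul_mem _ _ hx2)
  -- left inverse of a nonzero element of the span, lying in the span
  have hinv : ∀ u v : F, u • (1 : D) + v • x ≠ 0 →
      ∃ u' v' : F, (u' • (1 : D) + v' • x) * (u • (1 : D) + v • x) = 1 := by
    intro u v he
    by_cases hv : v = 0
    · subst hv
      simp only [zero_smul, add_zero] at he ⊢
      have hu : u ≠ 0 := fun h => he (by simp [h])
      exact ⟨u⁻¹, 0, by simp [smul_smul, inv_mul_cancel₀ hu, mul_inv_cancel₀ hu]⟩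
    · set t : F := u / v with ht
      set s : F := -q - t with hs
      set w : F := p - t * q - t ^ 2 with hw
      have hkey : (s • (1 : D) + x) * (u • (1 : D) + v • x) = (v * w) • (1 : D) := by
        have : (s • (1 : D) + x) * (u • (1 : D) + v • x)
            = (s * u) • (1 : D) + (s * v + u) • x + v • (x ^ 2) := by
          simp only [mul_add, add_mul, smul_mul_assoc, mul_smul_comm, smul_smul,
            one_mul, mul_one, sq]
          module
        rw [this, ← hpq, smul_add, smul_smul, smul_smul]
        have c1 : s * u + v * p = v * w := by
          rw [hs, hw, ht]
          field_simp
          ring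
        have c2 : s * v + u + v * q = 0 := by
          rw [hs, ht]
          field_simp
          ring
        rw [show (s*u) • (1:D) + (s*v+u) • x + ((v*p) • (1:D) + (v*q) • x)
            = (s*u + v*p) • (1:D) + (s*v + u + v*q) • x from by module,
          c1, c2, zero_smul, add_zero]
      have hwne : w ≠ 0 := by
        intro h0
        rw [h0, mul_zero, zero_smul] at hkey
        rcases mul_eq_zero.mp hkey with h | h
        · exact hns (-s) (by linear_combination (norm := module) h)
        · exact he h
      refine ⟨(v * w)⁻¹ * s, (v * w)⁻¹, ?_⟩
      have : ((v * w)⁻¹ * s) • (1 : D) + (v * w)⁻¹ • x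
          = (v * w)⁻¹ • (s • (1 : D) + x) := by
        rw [smul_add, smul_smul]
      rw [this, smul_mul_assoc, hkey, smul_smul,
        inv_mul_cancel₀ (mul_ne_zero hv hwne), one_smul]
  rw [Fintype.linearIndependent_iff]
  intro g hg
  simp only [Fin.sum_univ_four, Matrix.cons_val_zero, Matrix.cons_val_one,
    Matrix.head_cons, Matrix.cons_val_two, Matrix.tail_cons, Matrix.cons_val_three] at hg
  -- hg : g 0 • 1 + g 1 • x + g 2 • y + g 3 • (x*y) = 0
  have hcd : g 2 • (1 : D) + g 3 • x = 0 := by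
    by_contra he
    apply hy
    obtain ⟨u', v', hz⟩ := hinv (g 2) (g 3) he
    have hey : (g 2 • (1 : D) + g 3 • x) * y = (-(g 0)) • (1 : D) + (-(g 1)) • x := by
      have : (g 2 • (1 : D) + g 3 • x) * y = g 2 • y + g 3 • (x * y) := by
        simp [add_mul, smul_mul_assoc]
      rw [this]
      linear_combination (norm := module) hg
    have : y = (u' • (1 : D) + v' • x) * ((-(g 0)) • (1 : D) + (-(g 1)) • x) := by
      rw [← hey, ← mul_assoc, hz, one_mul]
    rw [this]
    exact hmul _ _ _ _
  obtain ⟨h2, h3⟩ := hli _ _ hcd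
  rw [h2, h3] at hg
  simp only [zero_smul, add_zero] at hg
  obtain ⟨h0, h1⟩ := hli _ _ hg
  intro i
  fin_cases i <;> assumption
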